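/- arXiv:2203.14175 — 3 statements merged into one kernel-verified Lean document; each statement's English description precedes it below -/
import Mathlib

section
/- Let P ⊂ ℙ¹ × ℙ¹ be a finite subscheme concentrated at the point p given by x = 0, z = 0, with ν = ν(P) and τ(P) = (t₀, …, t_{ν−1}). Then the set of monomials { x^i z^j : 0 ≤ j ≤ ν − 1, 0 ≤ i ≤ t_j − 1 } gives a ℂ-vector space basis of the local ring O_{P,p} = O_p / I_P, where O_p = ℂ[x,z]_{(x,z)}. In particular, the ideal I_P admits generators f₀, …, f_{ν−2}, x^{t_{ν−1}} z^{ν−1}, z^ν where each f_k = x^{t_k} z^k + Σ_{j=k+1}^{ν−1} Σ_{i=0}^{t_j − 1} a_{ijk} x^i z^j for some constants a_{ijk} ∈ ℂ. -/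
noncomputable section

open MvPolynomial

/-- The local model at the point `p = (x = 0, z = 0)`: since a finite scheme
concentrated at `p` has ideal containing a power of `(x, z)`, its local ring is
a quotient of the polynomial ring `ℂ[x, z]`. -/
abbrev Rp : Type := MvPolynomial (Fin 2) ℂ

/-- the coordinate `x` -/
abbrev xv : Rp := X 0

/-- the coordinate `z` -/
abbrev zv : Rp := X 1

/-- `ν(P)` : the smallest `ν` such that `z^ν ∈ I_P`, i.e. such that `P` is
contained in the `ν`-fold thickened horizontal line `z^ν = 0`. -/
def nuOf (I : Ideal Rp) : ℕ := sInf {v : ℕ | zv ^ v ∈ I}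

/-- `τ(P)_j` : the length of the `j`-th layer of the filtration of `P` by
intersections with the reduced horizontal line.  Algebraically, the `j`-th
layer is the subscheme cut out by the colon ideal `(I : z^j)`, and its
intersection with the line `z = 0` has length equal to the colength of
`(I : z^j) + (z)`. -/
def tOf (I : Ideal Rp) (j : ℕ) : ℕ :=
  Module.finrank ℂ (Rp ⧸ (I.colon (Ideal.span {zv ^ j}) ⊔ Ideal.span {zv}))

namespace St4

/-- the maximal ideal (x,z) -/
abbrev P : Ideal Rp := Ideal.span {xv, zv}

lemma mem_P_iff {f : Rp} : f ∈ P ↔ constantCoeff f = 0 := by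
  have h1 : ({xv, zv} : Set Rp) = MvPolynomial.X '' (Set.univ : Set (Fin 2)) := by
    ext g
    simp [Set.image_univ, Fin.exists_fin_two, eq_comm]
  rw [P, h1, mem_ideal_span_X_image]
  constructor
  · intro h
    by_contra hc
    have h0 : (0 : Fin 2 →₀ ℕ) ∈ f.support := by
      rw [mem_support_iff]
      simpa [constantCoeff_eq] using hc
    obtain ⟨i, -, hi⟩ := h 0 h0
    simp at hi
  · intro h m hm
    by_cases hmz : m = 0
    · exfalso
      rw [mem_support_iff] at hm
      rw [hmz] at hm
      exact hm (by simpa [constantCoeff_eq] using h)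
    · obtain ⟨i, hi⟩ := Finsupp.ne_iff.mp hmz
      exact ⟨i, Set.mem_univ i, by simpa using hi⟩

/-- the unit trick: a "unit" (nonzero constant plus maximal-ideal element) times `w`
in `J` forces `w ∈ J`, provided `J` contains a power of the maximal ideal. -/
lemma unit_trick {J : Ideal Rp} {N : ℕ} (hN : P ^ N ≤ J) {c : ℂ} (hc : c ≠ 0)
    {m : Rp} (hm : m ∈ P) {w : Rp} (h : (C c + m) * w ∈ J) : w ∈ J := by
  have key : ∀ k : ℕ, Ideal.span {w} ≤ J ⊔ P ^ k * Ideal.span {w} := by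
    intro k
    induction k with
    | zero => simpa using le_sup_of_le_right (by simp [Ideal.one_eq_top])
    | succ k ih =>
      have base : Ideal.span {w} ≤ J ⊔ P * Ideal.span {w} := by
        rw [Ideal.span_singleton_le_iff_mem]
        have hcc : (C c⁻¹ : Rp) * C c = 1 := by
          rw [← C_mul, inv_mul_cancel₀ hc, C_1]
        have hw : w = C c⁻¹ * ((C c + m) * w) - C c⁻¹ * (m * w) := by
          linear_combination (-w) * hcc
        have hmem : C c⁻¹ * ((C c + m) * w) - C c⁻¹ * (m * w)
            ∈ J ⊔ P * Ideal.span {w} :=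
          sub_mem (Submodule.mem_sup_left (Ideal.mul_mem_left _ _ h))
            (Submodule.mem_sup_right (Ideal.mul_mem_left _ _
              (Ideal.mul_mem_mul hm (Ideal.subset_span rfl))))
        rwa [← hw] at hmem
      calc Ideal.span {w} ≤ J ⊔ P * Ideal.span {w} := base
        _ ≤ J ⊔ P * (J ⊔ P ^ k * Ideal.span {w}) := by
            exact sup_le_sup_left (Ideal.mul_mono_right ih) J
        _ ≤ J ⊔ P ^ (k+1) * Ideal.span {w} := by
            rw [Ideal.mul_sup]
            refine sup_le le_sup_left (sup_le ?_ ?_)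
            · exact le_sup_of_le_left (Ideal.mul_le_right)
            · rw [← mul_assoc, ← pow_succ']
              exact le_sup_right
  have := key N
  rw [Ideal.span_singleton_le_iff_mem] at this
  have h2 : J ⊔ P ^ N * Ideal.span {w} ≤ J :=
    sup_le le_rfl (le_trans Ideal.mul_le_left hN)
  exact h2 this

end St4

namespace St4

variable (I : Ideal Rp)

/-- the ideal whose colength is `t_j` -/
def Jd (j : ℕ) : Ideal Rp := I.colon (Ideal.span {zv ^ j}) ⊔ Ideal.span {zv}

/-- the candidate value of `t_j` : the least `i` with `x^i ∈ J_j` -/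
def u (j : ℕ) : ℕ := sInf {i : ℕ | xv ^ i ∈ Jd I j}

variable {I} {N : ℕ} (hN : P ^ N ≤ I)

include hN

omit hN in
lemma zv_mem_P : zv ∈ P := Ideal.subset_span (Set.mem_insert_of_mem _ rfl)

omit hN in
lemma xv_mem_P : xv ∈ P := Ideal.subset_span (Set.mem_insert _ _)

lemma zpow_nu_mem : zv ^ nuOf I ∈ I := by
  have h : nuOf I ∈ {v : ℕ | zv ^ v ∈ I} :=
    Nat.sInf_mem ⟨N, hN (Ideal.pow_mem_pow zv_mem_P N)⟩
  exact h

omit hN in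
lemma not_zpow_mem {j : ℕ} (hj : j < nuOf I) : zv ^ j ∉ I := by
  intro h
  have h2 : nuOf I ≤ j := Nat.sInf_le h
  omega

omit hN in
lemma I_le_colon (j : ℕ) : I ≤ I.colon (Ideal.span {zv ^ j}) :=
  fun f hf => Ideal.mem_colon_span_singleton.mpr (Ideal.mul_mem_right _ _ hf)

lemma P_pow_le_Jd (j : ℕ) : P ^ N ≤ Jd I j :=
  le_trans hN (le_trans (I_le_colon j) le_sup_left)

lemma colon_le_P {j : ℕ} (hj : j < nuOf I) : I.colon (Ideal.span {zv ^ j}) ≤ P := by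
  intro f hf
  rw [mem_P_iff]
  by_contra hc
  have hm : f - C (constantCoeff f) ∈ P := by
    rw [mem_P_iff]
    simp
  have hfz : (C (constantCoeff f) + (f - C (constantCoeff f))) * zv ^ j ∈ I := by
    rw [add_sub_cancel]
    exact Ideal.mem_colon_span_singleton.mp hf
  exact not_zpow_mem hj (unit_trick hN hc hm hfz)

lemma Jd_le_P {j : ℕ} (hj : j < nuOf I) : Jd I j ≤ P :=
  sup_le (colon_le_P hN hj) (Ideal.span_le.mpr (by
    intro g hg
    rw [Set.mem_singleton_iff] at hg
    exact hg ▸ zv_mem_P))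

lemma xpow_u_mem (j : ℕ) : xv ^ u I j ∈ Jd I j := by
  have h : u I j ∈ {i : ℕ | xv ^ i ∈ Jd I j} :=
    Nat.sInf_mem ⟨N, P_pow_le_Jd hN j (Ideal.pow_mem_pow xv_mem_P N)⟩
  exact h

omit hN in
lemma not_xpow_mem {j i : ℕ} (hi : i < u I j) : xv ^ i ∉ Jd I j := by
  intro h
  have h2 : u I j ≤ i := Nat.sInf_le h
  omega

lemma nu_pos (hIm : I ≤ P) : 0 < nuOf I := by
  rcases Nat.eq_zero_or_pos (nuOf I) with h0 | h
  · exfalso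
    have h1 : (1 : Rp) ∈ I := by simpa [h0] using zpow_nu_mem hN
    have := mem_P_iff.mp (hIm h1)
    simp at this
  · exact h

end St4

namespace St4

lemma mono_eq (d : Fin 2 →₀ ℕ) (a : ℂ) :
    (monomial d a : Rp) = a • (xv ^ (d 0) * zv ^ (d 1)) := by
  rw [monomial_eq, Finsupp.prod_fintype _ _ (fun i => pow_zero _), Fin.prod_univ_two]
  rw [smul_eq_C_mul]

lemma mem_of_monomials {M : Submodule ℂ Rp} (f : Rp)
    (h : ∀ d : Fin 2 →₀ ℕ, f.coeff d ≠ 0 → (xv ^ (d 0) * zv ^ (d 1)) ∈ M) :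
    f ∈ M := by
  rw [← support_sum_monomial_coeff f]
  refine Submodule.sum_mem _ (fun d hd => ?_)
  rw [mono_eq]
  exact Submodule.smul_mem _ _ (h d (mem_support_iff.mp hd))

variable {I : Ideal Rp} {N : ℕ} (hN : P ^ N ≤ I)

include hN

lemma indJ {j : ℕ} (c : ℕ → ℂ)
    (h : (∑ i ∈ Finset.range (u I j), C (c i) * xv ^ i) ∈ Jd I j) :
    ∀ i < u I j, c i = 0 := by
  by_contra hc
  push_neg at hc
  obtain ⟨i₀, hi₀u, hi₀c⟩ := hc
  have hex : ∃ i, i < u I j ∧ c i ≠ 0 := ⟨i₀, hi₀u, hi₀c⟩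
  classical
  set i₁ := Nat.find hex with hi₁def
  obtain ⟨h1u, h1c⟩ := Nat.find_spec hex
  have hmin : ∀ i < i₁, c i = 0 := by
    intro i hi
    by_contra hci
    exact Nat.find_min hex hi ⟨lt_trans hi h1u, hci⟩
  -- rewrite the sum
  have hsplit : (∑ i ∈ Finset.range (u I j), C (c i) * xv ^ i)
      = (C (c i₁) + xv * (∑ i ∈ Finset.range (u I j - i₁ - 1),
          C (c (i₁ + 1 + i)) * xv ^ i)) * xv ^ i₁ := by
    rw [Finset.range_eq_Ico, ← Finset.sum_Ico_consecutive _ (Nat.zero_le i₁) (le_of_lt h1u)]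
    have hz : (∑ i ∈ Finset.Ico 0 i₁, C (c i) * xv ^ i) = 0 := by
      refine Finset.sum_eq_zero (fun i hi => ?_)
      rw [Finset.mem_Ico] at hi
      rw [hmin i hi.2, map_zero, zero_mul]
    rw [hz, zero_add, Finset.sum_Ico_eq_sum_range]
    have hu : u I j - i₁ = (u I j - i₁ - 1) + 1 := by omega
    rw [hu, Finset.sum_range_succ', add_comm, add_mul, Finset.mul_sum, Finset.sum_mul]
    congr 1
    · refine Finset.sum_congr (by rw [Nat.add_sub_cancel, Finset.range_eq_Ico]) (fun i hi => ?_)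
      have he : i₁ + (i + 1) = i₁ + 1 + i := by omega
      rw [he]
      ring
  rw [hsplit] at h
  have hm : xv * (∑ i ∈ Finset.range (u I j - i₁ - 1),
      C (c (i₁ + 1 + i)) * xv ^ i) ∈ P := Ideal.mul_mem_right _ _ xv_mem_P
  exact not_xpow_mem h1u (unit_trick (P_pow_le_Jd hN j) h1c hm h)

/-- spanning : the monomial images span the quotient by `Jd I j` -/
lemma spanJ (j : ℕ) :
    ⊤ ≤ Submodule.span ℂ (Set.range fun i : Fin (u I j) =>
      (Ideal.Quotient.mkₐ ℂ (Jd I j)) (xv ^ (i : ℕ))) := by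
  intro q _
  obtain ⟨f, rfl⟩ := Ideal.Quotient.mkₐ_surjective ℂ (Jd I j) q
  have hf : f ∈ Submodule.comap (Ideal.Quotient.mkₐ ℂ (Jd I j)).toLinearMap
      (Submodule.span ℂ (Set.range fun i : Fin (u I j) =>
        (Ideal.Quotient.mkₐ ℂ (Jd I j)) (xv ^ (i : ℕ)))) := by
    refine mem_of_monomials f (fun d _ => ?_)
    simp only [Submodule.mem_comap, AlgHom.toLinearMap_apply]
    rcases Nat.eq_zero_or_pos (d 1) with h1 | h1
    · rcases lt_or_ge (d 0) (u I j) with h0 | h0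
      · rw [h1, pow_zero, mul_one]
        exact Submodule.subset_span ⟨⟨d 0, h0⟩, rfl⟩
      · have hmem : xv ^ (d 0) * zv ^ (d 1) ∈ Jd I j := by
          rw [h1, pow_zero, mul_one]
          have : xv ^ (d 0) = xv ^ (d 0 - u I j) * xv ^ (u I j) := by
            rw [← pow_add]; congr 1; omega
          rw [this]
          exact Ideal.mul_mem_left _ _ (xpow_u_mem hN j)
        rw [(Ideal.Quotient.mkₐ_eq_mk ℂ (Jd I j)), Ideal.Quotient.eq_zero_iff_mem.mpr hmem]
        exact Submodule.zero_mem _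
    · have hmem : xv ^ (d 0) * zv ^ (d 1) ∈ Jd I j := by
        have : xv ^ (d 0) * zv ^ (d 1) = (xv ^ (d 0) * zv ^ (d 1 - 1)) * zv := by
          rw [mul_assoc, ← pow_succ]; congr 2; omega
        rw [this]
        exact le_sup_right (α := Ideal Rp) (Ideal.mul_mem_left _ _
          (Ideal.subset_span rfl))
      rw [(Ideal.Quotient.mkₐ_eq_mk ℂ (Jd I j)), Ideal.Quotient.eq_zero_iff_mem.mpr hmem]
      exact Submodule.zero_mem _
  exact hf

/-- the monomial images are linearly independent in the quotient by `Jd I j` -/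
lemma liJ (j : ℕ) :
    LinearIndependent ℂ (fun i : Fin (u I j) =>
      (Ideal.Quotient.mkₐ ℂ (Jd I j)) (xv ^ (i : ℕ))) := by
  rw [Fintype.linearIndependent_iff]
  intro g hg
  classical
  set c : ℕ → ℂ := fun i => if h : i < u I j then g ⟨i, h⟩ else 0 with hc
  have hsum : (∑ i ∈ Finset.range (u I j), C (c i) * xv ^ i) ∈ Jd I j := by
    rw [← Ideal.Quotient.eq_zero_iff_mem, ← Ideal.Quotient.mkₐ_eq_mk ℂ, map_sum]
    rw [← hg]
    rw [Finset.sum_range] at *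
    refine Finset.sum_congr rfl (fun i _ => ?_)
    rw [← smul_eq_C_mul, map_smul, hc]
    simp [i.isLt]
  intro i
  have := indJ hN c hsum i.1 i.isLt
  rw [hc] at this
  simpa [i.isLt] using this

/-- basis of the quotient by `Jd I j`, hence `tOf I j = u I j`. -/
lemma t_eq_u (j : ℕ) : tOf I j = u I j := by
  have b : Module.Basis (Fin (u I j)) ℂ (Rp ⧸ Jd I j) := Module.Basis.mk (liJ hN j) (spanJ hN j)
  show Module.finrank ℂ (Rp ⧸ Jd I j) = u I j
  rw [Module.finrank_eq_card_basis b, Fintype.card_fin]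

end St4

namespace St4

/-- monomial attached to an index pair `⟨j, i⟩ ↦ x^i z^j` -/
def F (p : (_ : ℕ) × ℕ) : Rp := xv ^ p.2 * zv ^ p.1

/-- index set for basis monomials with `z`-degree at least `m` -/
def Sm (I : Ideal Rp) (m : ℕ) : Finset ((_ : ℕ) × ℕ) :=
  (Finset.Ico m (nuOf I)).sigma fun j => Finset.range (u I j)

/-- span of the basis monomials with `z`-degree at least `m` -/
def V (I : Ideal Rp) (m : ℕ) : Submodule ℂ Rp := Submodule.span ℂ (F '' (Sm I m))

lemma V_mono {I : Ideal Rp} {m m' : ℕ} (h : m ≤ m') : V I m' ≤ V I m := by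
  refine Submodule.span_mono (Set.image_mono ?_)
  intro p hp
  simp only [Sm, Finset.mem_coe, Finset.mem_sigma, Finset.mem_Ico] at hp ⊢
  exact ⟨⟨by omega, hp.1.2⟩, hp.2⟩

lemma mem_V {I : Ideal Rp} {m j i : ℕ} (hj1 : m ≤ j) (hj2 : j < nuOf I)
    (hi : i < u I j) : xv ^ i * zv ^ j ∈ V I m :=
  Submodule.subset_span ⟨⟨j, i⟩, by
    simp [Sm, Finset.mem_sigma, Finset.mem_Ico, hj1, hj2, hi], rfl⟩

lemma V_nu {I : Ideal Rp} : V I (nuOf I) = ⊥ := by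
  rw [V, Sm, Finset.Ico_self]
  simp

lemma V_eq_sum {I : Ideal Rp} {m : ℕ} {w : Rp} (hw : w ∈ V I m) :
    ∃ a : ℕ → ℕ → ℂ, w = ∑ j ∈ Finset.Ico m (nuOf I),
      ∑ i ∈ Finset.range (u I j), a i j • (xv ^ i * zv ^ j) := by
  classical
  rw [V, Finsupp.mem_span_image_iff_linearCombination] at hw
  obtain ⟨l, hls, hlw⟩ := hw
  rw [Finsupp.mem_supported] at hls
  refine ⟨fun i j => l ⟨j, i⟩, ?_⟩
  have h2 : (∑ p ∈ Sm I m, l p • F p) = ∑ j ∈ Finset.Ico m (nuOf I),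
      ∑ i ∈ Finset.range (u I j), l ⟨j, i⟩ • (xv ^ i * zv ^ j) := by
    rw [Sm, Finset.sum_sigma]
    rfl
  rw [← h2, ← hlw, Finsupp.linearCombination_apply, Finsupp.sum]
  refine Finset.sum_subset (fun p hp => ?_) (fun p _ hp => ?_)
  · exact hls (Finset.mem_coe.mpr hp)
  · rw [Finsupp.notMem_support_iff.mp hp, zero_smul]

lemma V_factor {I : Ideal Rp} {m : ℕ} {w : Rp} (hw : w ∈ V I m) :
    ∃ w' : Rp, w = w' * zv ^ m := by
  have hle : V I m ≤ LinearMap.range (LinearMap.mulRight ℂ ((zv : Rp) ^ m)) := by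
    rw [V, Submodule.span_le]
    rintro - ⟨⟨j, i⟩, hp, rfl⟩
    simp only [Sm, Finset.mem_coe, Finset.mem_sigma, Finset.mem_Ico] at hp
    refine ⟨xv ^ i * zv ^ (j - m), ?_⟩
    simp only [LinearMap.mulRight_apply, F]
    rw [mul_assoc, ← pow_add]
    congr 2
    omega
  obtain ⟨w', hw'⟩ := hle hw
  exact ⟨w', by rw [← hw']; simp [LinearMap.mulRight_apply]⟩

variable {I : Ideal Rp} {N : ℕ} (hN : P ^ N ≤ I)

include hN

/-- linear independence of the basis monomials modulo `I` -/
lemma indA : ∀ (d : ℕ) (c : ℕ → ℕ → ℂ) (j₀ : ℕ), nuOf I ≤ j₀ + d →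
    (∑ j ∈ Finset.Ico j₀ (nuOf I), ∑ i ∈ Finset.range (u I j),
      c i j • (xv ^ i * zv ^ j)) ∈ I →
    ∀ j, j₀ ≤ j → j < nuOf I → ∀ i < u I j, c i j = 0 := by
  intro d
  induction d with
  | zero => intro c j₀ hd _ j hj hjn; omega
  | succ d ih =>
    intro c j₀ hd hS j hj hjn i hi
    by_cases hj₀ : nuOf I ≤ j₀
    · omega
    push_neg at hj₀
    rw [Finset.sum_eq_sum_Ico_succ_bot hj₀] at hS
    set h : Rp := ∑ j' ∈ Finset.Ico (j₀+1) (nuOf I), ∑ i' ∈ Finset.range (u I j'),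
      c i' j' • (xv ^ i' * zv ^ (j' - (j₀+1))) with hh
    set g : Rp := (∑ i' ∈ Finset.range (u I j₀), c i' j₀ • xv ^ i') + zv * h with hg
    have hgz : g * zv ^ j₀ = (∑ i' ∈ Finset.range (u I j₀), c i' j₀ • (xv ^ i' * zv ^ j₀))
        + ∑ j' ∈ Finset.Ico (j₀+1) (nuOf I), ∑ i' ∈ Finset.range (u I j'),
          c i' j' • (xv ^ i' * zv ^ j') := by
      rw [hg, add_mul, Finset.sum_mul]
      congr 1
      · exact Finset.sum_congr rfl (fun i' _ => by rw [smul_mul_assoc])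
      · have hzz : zv * h * zv ^ j₀ = h * zv ^ (j₀ + 1) := by ring
        rw [hzz, hh, Finset.sum_mul]
        refine Finset.sum_congr rfl (fun j' hj' => ?_)
        rw [Finset.sum_mul]
        refine Finset.sum_congr rfl (fun i' _ => ?_)
        rw [Finset.mem_Ico] at hj'
        rw [smul_mul_assoc]
        congr 1
        rw [mul_assoc, ← pow_add]
        congr 2
        omega
    have hgcolon : g ∈ I.colon (Ideal.span {zv ^ j₀}) :=
      Ideal.mem_colon_span_singleton.mpr (by rw [hgz]; exact hS)
    have hhead : (∑ i' ∈ Finset.range (u I j₀), C (c i' j₀) * xv ^ i') ∈ Jd I j₀ := by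
      have h1 : (∑ i' ∈ Finset.range (u I j₀), c i' j₀ • xv ^ i') = g - zv * h := by
        rw [hg]; ring
      have h2 : (∑ i' ∈ Finset.range (u I j₀), C (c i' j₀) * xv ^ i')
          = g - zv * h := by
        rw [← h1]
        exact Finset.sum_congr rfl (fun i' _ => by rw [smul_eq_C_mul])
      rw [h2]
      exact sub_mem (le_sup_left (α := Ideal Rp) hgcolon)
        (le_sup_right (α := Ideal Rp)
          (Ideal.mul_mem_right h _ (Ideal.subset_span rfl)))
    have hc0 : ∀ i' < u I j₀, c i' j₀ = 0 := indJ hN _ hhead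
    have htail : (∑ j' ∈ Finset.Ico (j₀+1) (nuOf I), ∑ i' ∈ Finset.range (u I j'),
        c i' j' • (xv ^ i' * zv ^ j')) ∈ I := by
      have hzero : (∑ i' ∈ Finset.range (u I j₀), c i' j₀ • (xv ^ i' * zv ^ j₀)) = 0 := by
        refine Finset.sum_eq_zero (fun i' hi' => ?_)
        rw [Finset.mem_range] at hi'
        rw [hc0 i' hi', zero_smul]
      rwa [hzero, zero_add] at hS
    rcases eq_or_lt_of_le hj with rfl | hjgt
    · exact hc0 i hi
    · exact ih c (j₀+1) (by omega) htail j (by omega) hjn i hi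

/-- spanning modulo `I` : any multiple of `z^b` lies in `I + V b` -/
lemma spanQ : ∀ (d : ℕ) (w : Rp) (b : ℕ), nuOf I ≤ b + d →
    w * zv ^ b ∈ (I.restrictScalars ℂ) ⊔ V I b := by
  intro d
  induction d with
  | zero =>
    intro w b hb
    refine Submodule.mem_sup_left (show w * zv ^ b ∈ I from ?_)
    have : w * zv ^ b = (w * zv ^ (b - nuOf I)) * zv ^ nuOf I := by
      rw [mul_assoc, ← pow_add]
      congr 2
      omega
    rw [this]
    exact Ideal.mul_mem_left _ _ (zpow_nu_mem hN)
  | succ d ih =>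
    intro w b hb
    by_cases hd : nuOf I ≤ b + d
    · exact ih w b hd
    push_neg at hd
    have hbν : b < nuOf I := by omega
    have hw : w ∈ Submodule.comap (LinearMap.mulRight ℂ ((zv : Rp) ^ b))
        ((I.restrictScalars ℂ) ⊔ V I b) := by
      refine mem_of_monomials w (fun e _ => ?_)
      simp only [Submodule.mem_comap, LinearMap.mulRight_apply]
      rcases Nat.eq_zero_or_pos (e 1) with h1 | h1
      · rcases lt_or_ge (e 0) (u I b) with h0 | h0
        · refine Submodule.mem_sup_right ?_
          have heq : xv ^ (e 0) * zv ^ (e 1) * zv ^ b = xv ^ (e 0) * zv ^ b := by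
            rw [h1, pow_zero, mul_one]
          rw [heq]
          exact mem_V le_rfl hbν h0
        · obtain ⟨h', hcol, q, hq, hsum⟩ := Submodule.mem_sup.mp (xpow_u_mem hN b)
          obtain ⟨h'', hq''⟩ := Ideal.mem_span_singleton'.mp hq
          have heq : xv ^ (e 0) * zv ^ (e 1) * zv ^ b
              = xv ^ (e 0 - u I b) * h' * zv ^ b + (xv ^ (e 0 - u I b) * h'') * zv ^ (b+1) := by
            have hx : xv ^ (e 0) = xv ^ (e 0 - u I b) * (h' + h'' * zv) := by
              rw [hq'', hsum, ← pow_add]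
              congr 1
              omega
            rw [h1, pow_zero, mul_one, hx]
            ring
          rw [heq]
          refine Submodule.add_mem _ ?_ ?_
          · refine Submodule.mem_sup_left (show _ ∈ I from ?_)
            rw [mul_assoc]
            exact Ideal.mul_mem_left _ _ (Ideal.mem_colon_span_singleton.mp hcol)
          · exact Set.mem_of_mem_of_subset
              (ih (xv ^ (e 0 - u I b) * h'') (b+1) (by omega))
              (sup_le_sup_left (V_mono (by omega)) _)
      · have heq : xv ^ (e 0) * zv ^ (e 1) * zv ^ b
            = (xv ^ (e 0) * zv ^ (e 1 - 1)) * zv ^ (b+1) := by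
          rw [mul_assoc, mul_assoc, ← pow_add, ← pow_add]
          congr 2
          omega
        rw [heq]
        exact Set.mem_of_mem_of_subset (ih (xv ^ (e 0) * zv ^ (e 1 - 1)) (b+1) (by omega))
          (sup_le_sup_left (V_mono (by omega)) _)
    simpa using hw

/-- membership used to build the generators -/
lemma gen_mem (b : ℕ) :
    xv ^ (u I b) * zv ^ b ∈ (I.restrictScalars ℂ) ⊔ V I (b+1) := by
  obtain ⟨h', hcol, q, hq, hsum⟩ := Submodule.mem_sup.mp (xpow_u_mem hN b)
  obtain ⟨h'', hq''⟩ := Ideal.mem_span_singleton'.mp hq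
  have heq : xv ^ (u I b) * zv ^ b = h' * zv ^ b + h'' * zv ^ (b+1) := by
    rw [← hsum, ← hq'']
    ring
  rw [heq]
  refine Submodule.add_mem _ ?_ ?_
  · exact Submodule.mem_sup_left (show _ ∈ I from Ideal.mem_colon_span_singleton.mp hcol)
  · exact spanQ hN (nuOf I) h'' (b+1) (by omega)

end St4

set_option maxHeartbeats 2000000 in
open St4 in
/-- Let `P` be a finite subscheme of length `l ≥ 1`
concentrated at `p = (x = 0, z = 0)`, given by an ideal `I ⊆ (x, z)` of
colength `l` containing a power of `(x, z)`.  Write `ν = ν(P)` and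
`τ(P) = (t₀, …, t_{ν−1})`.  Then the monomials
`{x^i z^j : 0 ≤ j ≤ ν − 1, 0 ≤ i ≤ t_j − 1}` give a `ℂ`-basis of
`O_{P,p} = O_p / I_P`; and `I` admits generators
`f₀, …, f_{ν−2}, x^{t_{ν−1}} z^{ν−1}, z^ν` with
`f_k = x^{t_k} z^k + Σ_{j=k+1}^{ν−1} Σ_{i=0}^{t_j−1} a_{ijk} x^i z^j`. -/
theorem stmt4 (I : Ideal Rp) (l : ℕ) (hl : 1 ≤ l)
    (hIm : I ≤ Ideal.span {xv, zv})
    (hconc : ∃ N : ℕ, (Ideal.span {xv, zv}) ^ N ≤ I)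
    (hlen : Module.finrank ℂ (Rp ⧸ I) = l) :
    (∃ bas : Module.Basis ((j : Fin (nuOf I)) × Fin (tOf I (j : ℕ))) ℂ (Rp ⧸ I),
        ∀ ji, bas ji =
          Ideal.Quotient.mk I (xv ^ (ji.2 : ℕ) * zv ^ ((ji.1 : ℕ)))) ∧
    (∃ a : ℕ → ℕ → ℕ → ℂ,
      I = Ideal.span
        ((Set.range fun k : Fin (nuOf I - 1) =>
            xv ^ tOf I (k : ℕ) * zv ^ (k : ℕ) +
              ∑ j ∈ Finset.Ico ((k : ℕ) + 1) (nuOf I),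
                ∑ i ∈ Finset.range (tOf I j), a i j (k : ℕ) • (xv ^ i * zv ^ j)) ∪
          {xv ^ tOf I (nuOf I - 1) * zv ^ (nuOf I - 1), zv ^ nuOf I})) := by
  classical
  obtain ⟨N, hN⟩ := hconc
  have htu : ∀ j, tOf I j = u I j := fun j => t_eq_u hN j
  have hν1 : 1 ≤ nuOf I := nu_pos hN hIm
  set ν := nuOf I with hνdef
  set mkq := Ideal.Quotient.mkₐ ℂ I with hmkq
  set v : ((j : Fin ν) × Fin (tOf I (j : ℕ))) → Rp ⧸ I :=
    fun ji => mkq (xv ^ (ji.2 : ℕ) * zv ^ ((ji.1 : ℕ))) with hv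
  -- linear independence of the monomial family
  have hli : LinearIndependent ℂ v := by
    rw [Fintype.linearIndependent_iff]
    intro g hg
    set cg : ℕ → ℕ → ℂ := fun i j =>
      if h : j < ν ∧ i < tOf I j then g ⟨⟨j, h.1⟩, ⟨i, h.2⟩⟩ else 0 with hcg
    have hsum : mkq (∑ j ∈ Finset.Ico 0 ν, ∑ i ∈ Finset.range (u I j),
        cg i j • (xv ^ i * zv ^ j)) = 0 := by
      rw [← Finset.range_eq_Ico, map_sum, ← Fin.sum_univ_eq_sum_range
        (fun j => mkq (∑ i ∈ Finset.range (u I j), cg i j • (xv ^ i * zv ^ j)))]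
      rw [← hg, ← Finset.univ_sigma_univ, Finset.sum_sigma]
      refine Finset.sum_congr rfl (fun j _ => ?_)
      rw [map_sum, ← htu, ← Fin.sum_univ_eq_sum_range
        (fun i => mkq (cg i (j : ℕ) • (xv ^ i * zv ^ (j : ℕ))))]
      refine Finset.sum_congr rfl (fun i _ => ?_)
      rw [map_smul]
      congr 1
      rw [hcg]
      simp [j.isLt, i.isLt]
    have hmem : (∑ j ∈ Finset.Ico 0 ν, ∑ i ∈ Finset.range (u I j),
        cg i j • (xv ^ i * zv ^ j)) ∈ I := by
      rw [← Ideal.Quotient.eq_zero_iff_mem, ← Ideal.Quotient.mkₐ_eq_mk ℂ]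
      exact hsum
    have hzero := indA hN ν cg 0 (by omega) hmem
    intro ji
    have h1 : cg (ji.2 : ℕ) (ji.1 : ℕ) = 0 :=
      hzero (ji.1 : ℕ) (by omega) ji.1.isLt (ji.2 : ℕ) (by rw [← htu]; exact ji.2.isLt)
    rw [hcg] at h1
    simpa [ji.1.isLt, ji.2.isLt] using h1
  -- the monomial family spans
  have hsp : ⊤ ≤ Submodule.span ℂ (Set.range v) := by
    intro q _
    obtain ⟨f, rfl⟩ := Ideal.Quotient.mkₐ_surjective ℂ I q
    have hf0 : f ∈ (I.restrictScalars ℂ) ⊔ V I 0 := by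
      have := spanQ hN ν f 0 (by omega)
      simpa using this
    obtain ⟨p, hp, w, hw, hpw⟩ := Submodule.mem_sup.mp hf0
    have hmap : (V I 0).map mkq.toLinearMap ≤ Submodule.span ℂ (Set.range v) := by
      rw [V, Submodule.map_span]
      refine Submodule.span_mono ?_
      rintro - ⟨-, ⟨⟨j, i⟩, hmem, rfl⟩, rfl⟩
      simp only [Sm, Finset.mem_coe, Finset.mem_sigma, Finset.mem_Ico, Finset.mem_range] at hmem
      exact ⟨⟨⟨j, hmem.1.2⟩, ⟨i, by rw [htu]; exact hmem.2⟩⟩, rfl⟩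
    have : mkq f = mkq w := by
      rw [← hpw, map_add, Ideal.Quotient.mkₐ_eq_mk, Ideal.Quotient.eq_zero_iff_mem.mpr hp,
        zero_add]
    rw [this]
    exact hmap ⟨w, hw, rfl⟩
  refine ⟨⟨Module.Basis.mk hli hsp, fun ji => by rw [Module.Basis.mk_apply]; rfl⟩, ?_⟩
  -- generators
  have Hk : ∀ k : ℕ, ∃ a : ℕ → ℕ → ℂ,
      (xv ^ tOf I k * zv ^ k +
        ∑ j ∈ Finset.Ico (k + 1) ν, ∑ i ∈ Finset.range (tOf I j),
          a i j • (xv ^ i * zv ^ j)) ∈ I := by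
    intro k
    obtain ⟨p, hp, w, hw, hpw⟩ := Submodule.mem_sup.mp (gen_mem hN k)
    obtain ⟨b, hb⟩ := V_eq_sum hw
    refine ⟨fun i j => -(b i j), ?_⟩
    have heq : (xv ^ tOf I k * zv ^ k +
        ∑ j ∈ Finset.Ico (k + 1) ν, ∑ i ∈ Finset.range (tOf I j),
          (-(b i j)) • (xv ^ i * zv ^ j)) = p := by
      have hneg : (∑ j ∈ Finset.Ico (k + 1) ν, ∑ i ∈ Finset.range (tOf I j),
          (-(b i j)) • (xv ^ i * zv ^ j)) = -w := by
        rw [hb, ← Finset.sum_neg_distrib]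
        refine Finset.sum_congr rfl (fun j _ => ?_)
        rw [← Finset.sum_neg_distrib, htu]
        exact Finset.sum_congr rfl (fun i _ => by rw [neg_smul])
      rw [hneg, htu, ← hpw]
      ring
    rw [heq]
    exact hp
  set A : ℕ → ℕ → ℕ → ℂ := fun k => Classical.choose (Hk k) with hA
  set gens : Set Rp :=
    ((Set.range fun k : Fin (ν - 1) =>
        xv ^ tOf I (k : ℕ) * zv ^ (k : ℕ) +
          ∑ j ∈ Finset.Ico ((k : ℕ) + 1) ν,
            ∑ i ∈ Finset.range (tOf I j), A (k : ℕ) i j • (xv ^ i * zv ^ j)) ∪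
      {xv ^ tOf I (ν - 1) * zv ^ (ν - 1), zv ^ ν}) with hgens
  set G : Ideal Rp := Ideal.span gens with hG
  have hg1 : xv ^ tOf I (ν - 1) * zv ^ (ν - 1) ∈ I := by
    have := gen_mem hN (ν - 1)
    rw [show ν - 1 + 1 = ν from by omega, V_nu] at this
    rw [htu]
    simpa using this
  have hGI : G ≤ I := by
    rw [hG, Ideal.span_le, hgens]
    rintro f (⟨k, rfl⟩ | hf)
    · exact Classical.choose_spec (Hk (k : ℕ))
    · rcases hf with rfl | rfl
      · exact hg1
      · exact zpow_nu_mem hN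
  have HG : ∀ (d : ℕ) (w : Rp) (b : ℕ), ν ≤ b + d →
      w * zv ^ b ∈ (G.restrictScalars ℂ) ⊔ V I b := by
    intro d
    induction d with
    | zero =>
      intro w b hb
      refine Submodule.mem_sup_left (show w * zv ^ b ∈ G from ?_)
      have : w * zv ^ b = (w * zv ^ (b - ν)) * zv ^ ν := by
        rw [mul_assoc, ← pow_add]
        congr 2
        omega
      rw [this]
      refine Ideal.mul_mem_left _ _ (Ideal.subset_span ?_)
      rw [hgens]
      exact Or.inr (Or.inr rfl)
    | succ d ih =>
      intro w b hb
      by_cases hd : ν ≤ b + d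
      · exact ih w b hd
      push_neg at hd
      have hbν : b < ν := by omega
      have hw : w ∈ Submodule.comap (LinearMap.mulRight ℂ ((zv : Rp) ^ b))
          ((G.restrictScalars ℂ) ⊔ V I b) := by
        refine mem_of_monomials w (fun e _ => ?_)
        simp only [Submodule.mem_comap, LinearMap.mulRight_apply]
        rcases Nat.eq_zero_or_pos (e 1) with h1 | h1
        · rcases lt_or_ge (e 0) (u I b) with h0 | h0
          · refine Submodule.mem_sup_right ?_
            have heq : xv ^ (e 0) * zv ^ (e 1) * zv ^ b = xv ^ (e 0) * zv ^ b := by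
              rw [h1, pow_zero, mul_one]
            rw [heq]
            exact mem_V le_rfl hbν h0
          · rcases eq_or_lt_of_le (show b ≤ ν - 1 from by omega) with hb1 | hb1
            · -- b = ν - 1 : use the monomial generator
              refine Submodule.mem_sup_left (show _ ∈ G from ?_)
              have heq : xv ^ (e 0) * zv ^ (e 1) * zv ^ b
                  = xv ^ (e 0 - u I b) * (xv ^ tOf I (ν - 1) * zv ^ (ν - 1)) := by
                rw [h1, pow_zero, mul_one, ← hb1, htu, ← mul_assoc, ← pow_add]
                congr 2
                omega
              rw [heq]
              refine Ideal.mul_mem_left _ _ (Ideal.subset_span ?_)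
              rw [hgens]
              exact Or.inr (Or.inl rfl)
            · -- b < ν - 1 : use the generator f_b
              have hbb : b < ν - 1 := by omega
              set fb : Rp := xv ^ tOf I b * zv ^ b +
                ∑ j ∈ Finset.Ico (b + 1) ν,
                  ∑ i ∈ Finset.range (tOf I j), A b i j • (xv ^ i * zv ^ j) with hfb
              have hfbG : fb ∈ G := by
                refine Ideal.subset_span ?_
                rw [hgens]
                exact Or.inl ⟨⟨b, hbb⟩, rfl⟩
              set wb : Rp := ∑ j ∈ Finset.Ico (b + 1) ν,
                  ∑ i ∈ Finset.range (tOf I j), A b i j • (xv ^ i * zv ^ j) with hwb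
              have hwbV : wb ∈ V I (b + 1) := by
                rw [hwb]
                refine Submodule.sum_mem _ (fun j hj => Submodule.sum_mem _ (fun i hi => ?_))
                rw [Finset.mem_Ico] at hj
                rw [Finset.mem_range, htu] at hi
                exact Submodule.smul_mem _ _ (mem_V hj.1 hj.2 hi)
              obtain ⟨w', hw'⟩ := V_factor hwbV
              have he0 : e 0 - u I b + tOf I b = e 0 := by rw [htu]; omega
              have heq : xv ^ (e 0) * zv ^ (e 1) * zv ^ b
                  = xv ^ (e 0 - u I b) * fb - (xv ^ (e 0 - u I b) * w') * zv ^ (b + 1) := by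
                rw [h1, pow_zero, mul_one, hfb, hw']
                rw [mul_add, ← mul_assoc, ← pow_add, he0]
                ring
              rw [heq]
              refine Submodule.sub_mem _ (Submodule.mem_sup_left
                (show _ ∈ G from Ideal.mul_mem_left _ _ hfbG)) ?_
              exact Set.mem_of_mem_of_subset (ih (xv ^ (e 0 - u I b) * w') (b + 1) (by omega))
                (sup_le_sup_left (V_mono (by omega)) _)
        · have heq : xv ^ (e 0) * zv ^ (e 1) * zv ^ b
              = (xv ^ (e 0) * zv ^ (e 1 - 1)) * zv ^ (b + 1) := by
            rw [mul_assoc, mul_assoc, ← pow_add, ← pow_add]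
            congr 2
            omega
          rw [heq]
          exact Set.mem_of_mem_of_subset (ih (xv ^ (e 0) * zv ^ (e 1 - 1)) (b + 1) (by omega))
            (sup_le_sup_left (V_mono (by omega)) _)
      simpa using hw
  -- conclude I = G
  have hmain : I = G := by
    refine le_antisymm ?_ hGI
    intro f hf
    have hf0 : f ∈ (G.restrictScalars ℂ) ⊔ V I 0 := by
      have := HG ν f 0 (by omega)
      simpa using this
    obtain ⟨p, hp, w, hw, hpw⟩ := Submodule.mem_sup.mp hf0
    have hwI : w ∈ I := by
      have : w = f - p := by rw [← hpw]; ring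
      rw [this]
      exact Ideal.sub_mem _ hf (hGI hp)
    obtain ⟨b, hb⟩ := V_eq_sum hw
    have hb0 := indA hN ν b 0 (by omega) (by rw [← hb]; exact hwI)
    have hw0 : w = 0 := by
      rw [hb]
      refine Finset.sum_eq_zero (fun j hj => Finset.sum_eq_zero (fun i hi => ?_))
      rw [Finset.mem_Ico] at hj
      rw [Finset.mem_range] at hi
      rw [hb0 j (by omega) hj.2 i hi, zero_smul]
    rw [← hpw, hw0, add_zero]
    exact hp
  exact ⟨fun i j k => A k i j, hmain⟩

end
end

section
/- With S(k, l, n) as above and l > n + 1, the top locus S(l − n − 1, l, n) equals Ver(l, l), the locus of length-l schemes contained in a single vertical line of bidegree (1, 0). -/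
/-- Abstract setup encoding the geometry of zero-dimensional closed subschemes
of the smooth quadric surface `ℙ¹ × ℙ¹` over `ℂ`, and of curves on it, as used
in the paper.  `A` is the first `ℙ¹` factor (a point `a : A` determines the
vertical line `{a} × ℙ¹`, of bidegree `(1,0)`) and `B` is the second factor
(a point `b : B` determines the horizontal line `ℙ¹ × {b}`, of bidegree `(0,1)`). -/
structure QuadricSetup where
  /-- the first `ℙ¹` factor, indexing the lines of bidegree `(1,0)` -/
  A : Type
  /-- the second `ℙ¹` factor, indexing the lines of bidegree `(0,1)` -/
  B : Type
  /-- zero-dimensional closed subschemes `Z ⊂ ℙ¹ × ℙ¹` -/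
  Sub : Type
  /-- the topology coming from the Hilbert schemes `Hilb(l)` -/
  top : TopologicalSpace Sub
  /-- the length of a finite subscheme -/
  len : Sub → ℕ
  /-- `lenV Z a` = length of `Z ∩ D`, `D` the vertical line of bidegree `(1,0)` over `a` -/
  lenV : Sub → A → ℕ
  /-- `lenH Z b` = length of `Z ∩ E`, `E` the horizontal line of bidegree `(0,1)` over `b` -/
  lenH : Sub → B → ℕ
  /-- `h1 Z m n = dim_ℂ H¹(I_Z(m, n))`, where `I_Z` is the ideal sheaf of `Z`
  in `ℙ¹ × ℙ¹` and `O(m,n)` the line bundle of bidegree `(m,n)` -/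
  h1 : Sub → ℤ → ℤ → ℕ
  /-- the (finitely many) vertical lines meeting `Z` -/
  suppV : Sub → Finset A
  /-- the (finitely many) horizontal lines meeting `Z` -/
  suppH : Sub → Finset B
  /-- `sigma Z a` is the string `σ(X)` of the part `X` of `Z` supported on the
  vertical line over `a`: the lengths occurring in the filtration of `X` by
  intersections with the reduced line; the empty list if `Z` misses the line. -/
  sigma : Sub → A → List ℕ
  /-- `tau Z b`: the analogous string for horizontal lines -/
  tau : Sub → B → List ℕ
  /-- the topological Euler characteristic of a constructible family of subschemes -/
  chi : Set Sub → ℤ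
  /-- the topological Euler characteristic `χ(Hilb(l, (m, n)))` of the flag
  Hilbert scheme of pairs `(Z, C)` with `C ⊂ ℙ¹ × ℙ¹` a curve of bidegree
  `(m, n)` and `Z ⊂ C` a finite subscheme of length `l` -/
  chiFlag : ℕ → ℕ → ℕ → ℤ
  /-- curves (one-dimensional effective divisors) in `ℙ¹ × ℙ¹` -/
  Curve : Type
  /-- the bidegree of a curve -/
  bideg : Curve → ℕ × ℕ
  /-- irreducibility of a curve -/
  IsIrreducibleCurve : Curve → Prop
  /-- `memCurve Z C` : the finite subscheme `Z` is contained in the curve `C` -/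
  memCurve : Sub → Curve → Prop
  /-- containment of curves -/
  curveLE : Curve → Curve → Prop
  /-- union (divisor sum) of two curves -/
  unionC : Curve → Curve → Curve
  /-- the vertical line over `a`, as a curve of bidegree `(1,0)` -/
  lineV : A → Curve
  /-- the horizontal line over `b`, as a curve of bidegree `(0,1)` -/
  lineH : B → Curve
  /-- the `ν`-fold thickening `νE` of the horizontal line `E` over `b`,
  a curve of bidegree `(0, ν)` -/
  thickH : B → ℕ → Curve
  /-- the scheme-theoretic intersection `Z ∩ C` -/
  interC : Sub → Curve → Sub
  sigma_sorted : ∀ Z a, (sigma Z a).Chain' (· ≥ ·)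
  sigma_pos : ∀ Z a, ∀ r ∈ sigma Z a, 0 < r
  sigma_eq_nil : ∀ Z a, a ∉ suppV Z → sigma Z a = []
  sigma_head : ∀ Z a, (sigma Z a).headI = lenV Z a
  sigma_sum : ∀ Z, ∑ a ∈ suppV Z, (sigma Z a).sum = len Z
  tau_sorted : ∀ Z b, (tau Z b).Chain' (· ≥ ·)
  tau_pos : ∀ Z b, ∀ r ∈ tau Z b, 0 < r
  tau_eq_nil : ∀ Z b, b ∉ suppH Z → tau Z b = []
  tau_head : ∀ Z b, (tau Z b).headI = lenH Z b
  tau_sum : ∀ Z, ∑ b ∈ suppH Z, (tau Z b).sum = len Z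
  bideg_lineV : ∀ a, bideg (lineV a) = (1, 0)
  bideg_lineH : ∀ b, bideg (lineH b) = (0, 1)
  bideg_unionC : ∀ C C', bideg (unionC C C') = bideg C + bideg C'
  bideg_thickH : ∀ b ν, bideg (thickH b ν) = (0, ν)
  interC_mem : ∀ Z C, memCurve (interC Z C) C
  chi_empty : chi ∅ = 0

namespace QuadricSetup

variable (Q : QuadricSetup)

/-- `μ(Z)` : the smallest `μ` such that a curve of bidegree `(μ, 0)` contains `Z`. -/
noncomputable def mu (Z : Q.Sub) : ℕ :=
  sInf {μ | ∃ C, Q.bideg C = (μ, 0) ∧ Q.memCurve Z C}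

/-- `ν(Z)` : the smallest `ν` such that a curve of bidegree `(0, ν)` contains `Z`. -/
noncomputable def nu (Z : Q.Sub) : ℕ :=
  sInf {ν | ∃ C, Q.bideg C = (0, ν) ∧ Q.memCurve Z C}

/-- The locus `S(k, l, n)` of subschemes `Z` of length `l` with
`k = Σ_i Σ_{j : σ(X_i)_j > n+1} (σ(X_i)_j − n − 1)` (truncated subtraction
realizes the condition `σ(X_i)_j > n + 1`). -/
def Sloc (k l n : ℕ) : Set Q.Sub :=
  {Z | Q.len Z = l ∧ ∑ a ∈ Q.suppV Z, ((Q.sigma Z a).map fun r => r - (n + 1)).sum = k}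

/-- The locus `T(k, l, m)` of subschemes `Z` of length `l` with
`k = Σ_j Σ_{i : τ(Y_j)_i > m+1} (τ(Y_j)_i − m − 1)`. -/
def Tloc (k l m : ℕ) : Set Q.Sub :=
  {Z | Q.len Z = l ∧ ∑ b ∈ Q.suppH Z, ((Q.tau Z b).map fun r => r - (m + 1)).sum = k}

/-- `Ver(e, l)` : length-`l` subschemes meeting some vertical line in length `e`. -/
def Ver (e l : ℕ) : Set Q.Sub := {Z | Q.len Z = l ∧ ∃ a, Q.lenV Z a = e}

/-- `Hor(e, l)` : length-`l` subschemes meeting some horizontal line in length `e`. -/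
def Hor (e l : ℕ) : Set Q.Sub := {Z | Q.len Z = l ∧ ∃ b, Q.lenH Z b = e}

/-- The Brill–Noether locus `BN(k, l, (m, n)) = {Z ∈ Hilb(l) : dim_ℂ H¹(I_Z(m,n)) = k}`. -/
def BN (k l : ℕ) (m n : ℤ) : Set Q.Sub := {Z | Q.len Z = l ∧ Q.h1 Z m n = k}

end QuadricSetup

private lemma stmt12_auxC (n : ℕ) : ∀ L : List ℕ, (∀ r ∈ L, 0 < r) →
    (L.map (fun r => r - (n + 1))).sum + L.length ≤ L.sum := by
  intro L
  induction L with
  | nil => simp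
  | cons h t ih =>
    intro hp
    simp only [List.map_cons, List.sum_cons, List.length_cons]
    have h1 := hp h (by simp)
    have h2 := ih (fun r hr => hp r (by simp [hr]))
    omega

private lemma stmt12_auxD (n : ℕ) : ∀ L : List ℕ, (∀ r ∈ L, 0 < r) →
    0 < (L.map (fun r => r - (n + 1))).sum →
    (L.map (fun r => r - (n + 1))).sum + n + L.length ≤ L.sum := by
  intro L
  induction L with
  | nil => simp
  | cons h t ih =>
    intro hp hpos
    simp only [List.map_cons, List.sum_cons, List.length_cons] at *
    have h1 := hp h (by simp)
    have hp' : ∀ r ∈ t, 0 < r := fun r hr => hp r (by simp [hr])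
    by_cases hc : 0 < (t.map (fun r => r - (n + 1))).sum
    · have h2 := ih hp' hc
      omega
    · have h2 := stmt12_auxC n t hp'
      omega

/-- For `l > n + 1`, the top locus `S(l − n − 1, l, n)` equals
`Ver(l, l)`, the locus of length-`l` schemes contained in a single vertical
line of bidegree `(1, 0)`. -/
theorem stmt12 (Q : QuadricSetup) (l n : ℕ) (hl : n + 1 < l) :
    Q.Sloc (l - n - 1) l n = Q.Ver l l := by
  classical
  ext Z
  simp only [QuadricSetup.Sloc, QuadricSetup.Ver, Set.mem_setOf_eq]
  constructor
  · rintro ⟨hlen, hsum⟩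
    refine ⟨hlen, ?_⟩
    have hsl : ∑ a ∈ Q.suppV Z, (Q.sigma Z a).sum = l := by
      rw [Q.sigma_sum Z, hlen]
    have hkpos : 0 < l - n - 1 := by omega
    have hex : ∃ a ∈ Q.suppV Z, 0 < ((Q.sigma Z a).map (fun r => r - (n + 1))).sum := by
      by_contra hcon
      push_neg at hcon
      have hz : ∑ a ∈ Q.suppV Z, ((Q.sigma Z a).map (fun r => r - (n + 1))).sum = 0 :=
        Finset.sum_eq_zero fun a ha => Nat.le_zero.mp (hcon a ha)
      omega
    obtain ⟨a0, ha0, hfa0⟩ := hex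
    have hsplitF := Finset.add_sum_erase (Q.suppV Z)
      (fun a => ((Q.sigma Z a).map (fun r => r - (n + 1))).sum) ha0
    have hsplitL := Finset.add_sum_erase (Q.suppV Z) (fun a => (Q.sigma Z a).length) ha0
    have hsplitS := Finset.add_sum_erase (Q.suppV Z) (fun a => (Q.sigma Z a).sum) ha0
    have hD := stmt12_auxD n (Q.sigma Z a0) (Q.sigma_pos Z a0) hfa0
    have hC : ∑ a ∈ (Q.suppV Z).erase a0,
        (((Q.sigma Z a).map (fun r => r - (n + 1))).sum + (Q.sigma Z a).length) ≤
        ∑ a ∈ (Q.suppV Z).erase a0, (Q.sigma Z a).sum :=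
      Finset.sum_le_sum fun a _ => stmt12_auxC n (Q.sigma Z a) (Q.sigma_pos Z a)
    rw [Finset.sum_add_distrib] at hC
    -- total length ≤ 1
    have hT : ∑ a ∈ Q.suppV Z, (Q.sigma Z a).length ≤ 1 := by omega
    have hne : (Q.sigma Z a0) ≠ [] := by
      intro h
      rw [h] at hfa0
      simp at hfa0
    have hlen1 : 1 ≤ (Q.sigma Z a0).length := List.length_pos_iff.mpr hne
    have hla0 : (Q.sigma Z a0).length = 1 := by omega
    have hsum0 : ∑ a ∈ (Q.suppV Z).erase a0, (Q.sigma Z a).sum = 0 := by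
      refine Finset.sum_eq_zero fun a ha => ?_
      have hle := Finset.single_le_sum (f := fun a => (Q.sigma Z a).length)
        (fun a _ => Nat.zero_le _) ha
      have h0 : (Q.sigma Z a).length = 0 := by omega
      rw [List.length_eq_zero_iff.mp h0]
      rfl
    have hsa0 : (Q.sigma Z a0).sum = l := by omega
    obtain ⟨r, hr⟩ := List.length_eq_one_iff.mp hla0
    refine ⟨a0, ?_⟩
    have hhead := Q.sigma_head Z a0
    rw [hr] at hhead hsa0
    simp at hhead hsa0
    omega
  · rintro ⟨hlen, a, ha⟩
    refine ⟨hlen, ?_⟩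
    have hsl : ∑ a ∈ Q.suppV Z, (Q.sigma Z a).sum = l := by
      rw [Q.sigma_sum Z, hlen]
    have hhead : (Q.sigma Z a).headI = l := by rw [Q.sigma_head]; exact ha
    have hmem : a ∈ Q.suppV Z := by
      by_contra h
      rw [Q.sigma_eq_nil Z a h] at hhead
      simp at hhead
      omega
    obtain ⟨h0, t, hht⟩ : ∃ h0 t, Q.sigma Z a = h0 :: t := by
      cases hcs : Q.sigma Z a with
      | nil => rw [hcs] at hhead; simp at hhead; omega
      | cons h0 t => exact ⟨h0, t, rfl⟩
    have hh0 : h0 = l := by rw [hht] at hhead; simpa using hhead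
    have hsge : l ≤ (Q.sigma Z a).sum := by
      rw [hht, List.sum_cons, hh0]; omega
    have hsplitS := Finset.add_sum_erase (Q.suppV Z) (fun a => (Q.sigma Z a).sum) hmem
    have hsplitF := Finset.add_sum_erase (Q.suppV Z)
      (fun a => ((Q.sigma Z a).map (fun r => r - (n + 1))).sum) hmem
    have hrest0 : ∑ b ∈ (Q.suppV Z).erase a, (Q.sigma Z b).sum = 0 := by omega
    have hsa : (Q.sigma Z a).sum = l := by omega
    have ht0 : t = [] := by
      cases t with
      | nil => rfl
      | cons x xs =>
        have hx := Q.sigma_pos Z a x (by rw [hht]; simp)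
        rw [hht, List.sum_cons, List.sum_cons, hh0] at hsa
        omega
    have hfa : ((Q.sigma Z a).map (fun r => r - (n + 1))).sum = l - n - 1 := by
      rw [hht, ht0, hh0]
      simp
      omega
    have hrestF : ∑ b ∈ (Q.suppV Z).erase a,
        ((Q.sigma Z b).map (fun r => r - (n + 1))).sum = 0 := by
      refine Finset.sum_eq_zero fun b hb => ?_
      have hle := Finset.single_le_sum (f := fun b => (Q.sigma Z b).sum)
        (fun b _ => Nat.zero_le _) hb
      have hb0 : (Q.sigma Z b).sum = 0 := by omega
      have hbe : Q.sigma Z b = [] := by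
        cases hcs : Q.sigma Z b with
        | nil => rfl
        | cons x xs =>
          have hx := Q.sigma_pos Z b x (by rw [hcs]; simp)
          rw [hcs, List.sum_cons] at hb0
          omega
      rw [hbe]
      rfl
    omega
end

section
/- Assume l ≤ 2n + 3. Then for all k ≥ 1, S(k, l, n) = Ver(k + n + 1, l), the locus of length-l schemes Z for which some vertical line D of bidegree (1,0) satisfies length(Z ∩ D) = k + n + 1. -/
section Aux

lemma aux_le_headI {L : List ℕ} (hL : L.Chain' (· ≥ ·)) {r : ℕ} (hr : r ∈ L) :
    r ≤ L.headI := by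
  rw [List.Chain', List.isChain_iff_pairwise] at hL
  cases L with
  | nil => simp at hr
  | cons h t =>
    rcases List.mem_cons.1 hr with rfl | h'
    · simp
    · exact (List.pairwise_cons.1 hL).1 r h'

lemma aux_map_sum_zero {L : List ℕ} {n : ℕ} (h : ∀ r ∈ L, r ≤ n + 1) :
    (L.map fun r => r - (n + 1)).sum = 0 := by
  rw [List.sum_eq_zero]
  intro x hx
  obtain ⟨r, hr, rfl⟩ := List.mem_map.1 hx
  exact Nat.sub_eq_zero_of_le (h r hr)

lemma aux_main (Q : QuadricSetup) (Z : Q.Sub) (n : ℕ) (a : Q.A) (ha : a ∈ Q.suppV Z)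
    (hh : n + 2 ≤ (Q.sigma Z a).headI) (hl : Q.len Z ≤ 2 * n + 3) :
    ∑ a' ∈ Q.suppV Z, ((Q.sigma Z a').map fun r => r - (n + 1)).sum
      = (Q.sigma Z a).headI - (n + 1) := by
  obtain ⟨h0, t, hcons⟩ : ∃ h0 t, Q.sigma Z a = h0 :: t := by
    cases hs : Q.sigma Z a with
    | nil => rw [hs] at hh; simp [List.headI] at hh
    | cons h0 t => exact ⟨h0, t, rfl⟩
  have hhead : (Q.sigma Z a).headI = h0 := by rw [hcons]; rfl
  classical
  have htot := Q.sigma_sum Z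
  rw [← Finset.add_sum_erase _ _ ha] at htot ⊢
  have hrest : t.sum + ∑ a' ∈ (Q.suppV Z).erase a, (Q.sigma Z a').sum ≤ n + 1 := by
    rw [hcons] at htot
    simp only [List.sum_cons] at htot
    omega
  have herase : ∀ a' ∈ (Q.suppV Z).erase a,
      ((Q.sigma Z a').map fun r => r - (n + 1)).sum = 0 := by
    intro a' ha'
    apply aux_map_sum_zero
    intro r hr
    have h1 : r ≤ (Q.sigma Z a').sum :=
      List.single_le_sum (fun x _ => Nat.zero_le x) r hr
    have h2 : (Q.sigma Z a').sum ≤ ∑ a'' ∈ (Q.suppV Z).erase a, (Q.sigma Z a'').sum :=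
      Finset.single_le_sum (f := fun a'' => (Q.sigma Z a'').sum) (fun x _ => Nat.zero_le _) ha'
    omega
  rw [Finset.sum_eq_zero herase, hcons]
  simp only [List.map_cons, List.sum_cons, List.headI, add_zero]
  have htail : (t.map fun r => r - (n + 1)).sum = 0 := by
    apply aux_map_sum_zero
    intro r hr
    have h1 : r ≤ t.sum := List.single_le_sum (fun x _ => Nat.zero_le x) r hr
    omega
  omega

end Aux


/-- If `l ≤ 2n + 3`, then for all `k ≥ 1` one has
`S(k, l, n) = Ver(k + n + 1, l)`. -/
theorem stmt13 (Q : QuadricSetup) (l n : ℕ) (hl : l ≤ 2 * n + 3)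
    (k : ℕ) (hk : 1 ≤ k) :
    Q.Sloc k l n = Q.Ver (k + n + 1) l := by
  ext Z
  simp only [QuadricSetup.Sloc, QuadricSetup.Ver, Set.mem_setOf_eq]
  constructor
  · rintro ⟨hlen, hsum⟩
    refine ⟨hlen, ?_⟩
    have hl' : Q.len Z ≤ 2 * n + 3 := hlen ▸ hl
    obtain ⟨a, ha, hFa⟩ : ∃ a ∈ Q.suppV Z,
        ((Q.sigma Z a).map fun r => r - (n + 1)).sum ≠ 0 := by
      apply Finset.exists_ne_zero_of_sum_ne_zero
      rw [hsum]; omega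
    obtain ⟨r, hr, hrn⟩ : ∃ r ∈ Q.sigma Z a, n + 2 ≤ r := by
      by_contra hcon
      push_neg at hcon
      exact hFa (aux_map_sum_zero fun r hr => by have := hcon r hr; omega)
    have hhead : n + 2 ≤ (Q.sigma Z a).headI :=
      le_trans hrn (aux_le_headI (Q.sigma_sorted Z a) hr)
    have hmain := aux_main Q Z n a ha hhead hl'
    rw [hsum] at hmain
    refine ⟨a, ?_⟩
    rw [← Q.sigma_head Z a]
    omega
  · rintro ⟨hlen, a, hla⟩
    refine ⟨hlen, ?_⟩
    have hl' : Q.len Z ≤ 2 * n + 3 := hlen ▸ hl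
    have hhead : (Q.sigma Z a).headI = k + n + 1 := by rw [Q.sigma_head Z a, hla]
    have ha : a ∈ Q.suppV Z := by
      by_contra hcon
      rw [Q.sigma_eq_nil Z a hcon] at hhead
      simp at hhead
    have hmain := aux_main Q Z n a ha (by omega) hl'
    rw [hhead] at hmain
    omega
end
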